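/- Let n ≥ 2 be an integer. For C ∈ (0, π/2) define Y_C := 2·∫_C^{π/2} ((sin z / sin C)^{2(n−1)} − 1)^{−1/2} dz. Then limsup_{C → (π/2)⁻} Y_C ≤ 4·√(2/(n−1)). -/

import Mathlib

open Real Set Filter Topology

set_option maxHeartbeats 1000000 in
open MeasureTheory in
/-- `limsup_{C → (π/2)⁻} Y_C ≤ 4√(2/(n−1))`, where
`Y_C = 2∫_C^{π/2} ((sin z/sin C)^{2(n−1)} − 1)^{−1/2} dz` is the half-period of the
spherical catenoid. -/
theorem spherical_catenoid_halfperiod_limsup_upper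
    (n : ℕ) (hn : 2 ≤ n) :
    Filter.limsup
        (fun C : ℝ => 2 * ∫ z in C..(π / 2),
          ((Real.sin z / Real.sin C) ^ (2 * (n - 1)) - 1) ^ (-(1 : ℝ) / 2))
        (𝓝[<] (π / 2))
      ≤ 4 * Real.sqrt (2 / ((n : ℝ) - 1)) := by
  set m : ℕ := n - 1 with hmdef
  have hm1 : 1 ≤ m := by omega
  have hmcast : (m : ℝ) = (n : ℝ) - 1 := by
    have h1 : (1:ℕ) ≤ n := by omega
    rw [hmdef, Nat.cast_sub h1, Nat.cast_one]
  have hmpos : (0:ℝ) < (m:ℝ) := by exact_mod_cast hm1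
  have hpi : (0:ℝ) < π := Real.pi_pos
  have hpi3 : (3:ℝ) < π := Real.pi_gt_three
  -- nonnegativity of the integrand
  have hf_nonneg : ∀ C z : ℝ, 0 ≤ ((Real.sin z / Real.sin C) ^ (2 * m) - 1) ^ (-(1 : ℝ) / 2) := by
    intro C z
    rcases le_or_gt 0 ((Real.sin z / Real.sin C) ^ (2 * m) - 1) with h | h
    · exact Real.rpow_nonneg h _
    · rw [Real.rpow_def_of_neg h,
        show (-(1:ℝ)/2 * π) = -(π/2) by ring, Real.cos_neg, Real.cos_pi_div_two, mul_zero]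
  -- the eventual bound
  have hev : ∀ᶠ C in 𝓝[<] (π/2),
      2 * (∫ z in C..(π / 2), ((Real.sin z / Real.sin C) ^ (2 * m) - 1) ^ (-(1 : ℝ) / 2))
        ≤ 4 * Real.sqrt (2 / ((n : ℝ) - 1)) := by
    filter_upwards [Ioo_mem_nhdsLT (show π/2 - 0.05 < π/2 by norm_num)] with C hC
    obtain ⟨hC1, hC2⟩ := hC
    set a : ℝ := π/2 - C with hadef
    have ha0 : 0 < a := by simp only [hadef]; linarith
    have ha05 : a ≤ 0.05 := by simp only [hadef]; linarith
    have hCpos : (0:ℝ) < C := by linarith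
    have hCle : C ≤ π/2 := by linarith
    -- sin C bounds
    have hsinC : (0.9:ℝ) ≤ Real.sin C := by
      have hCeq : Real.sin C = Real.cos a := by
        rw [show C = π/2 - a by simp [hadef], Real.sin_pi_div_two_sub]
      have := Real.one_sub_sq_div_two_le_cos (x := a)
      rw [hCeq]; nlinarith
    have hsinC1 : Real.sin C ≤ 1 := Real.sin_le_one C
    have hsinCpos : (0:ℝ) < Real.sin C := by linarith
    -- elementary sine lower bound
    have hsinlb : ∀ t : ℝ, 0 < t → t ≤ 0.025 → 0.9 * t ≤ Real.sin t := by
      intro t ht ht'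
      have h := Real.sin_gt_sub_cube ht
      have ht2 : t^2 ≤ 0.000625 := by nlinarith
      nlinarith [mul_le_mul_of_nonneg_left ht2 ht.le]
    -- key pointwise lower bound
    have key : ∀ z ∈ Icc C (π/2),
        (0.729 * (m:ℝ) * a) * (z - C) ≤ (Real.sin z / Real.sin C) ^ (2*m) - 1 := by
      rintro z ⟨hz1, hz2⟩
      rcases eq_or_lt_of_le hz1 with heq | hzC
      · rw [← heq, div_self (ne_of_gt hsinCpos), one_pow, sub_self, sub_self, mul_zero]
      · have hza : z - C ≤ a := by simp only [hadef]; linarith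
        have h1 : 0.9 * ((z-C)/2) ≤ Real.sin ((z-C)/2) :=
          hsinlb _ (by linarith) (by linarith)
        have h2 : 0.9 * (a/2) ≤ Real.sin (a/2) := hsinlb _ (by linarith) (by linarith)
        have hcos : Real.sin (a/2) ≤ Real.cos ((z+C)/2) := by
          have h3 : Real.cos (π/2 - a/2) ≤ Real.cos ((z+C)/2) := by
            apply Real.cos_le_cos_of_nonneg_of_le_pi (by linarith) (by linarith)
            simp only [hadef]; linarith
          rwa [Real.cos_pi_div_two_sub] at h3
        have hsub : Real.sin z - Real.sin C
            = 2 * Real.sin ((z-C)/2) * Real.cos ((z+C)/2) := Real.sin_sub_sin z C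
        have hA : 0.9 * ((z-C)/2) * (0.9 * (a/2))
            ≤ Real.sin ((z-C)/2) * Real.cos ((z+C)/2) :=
          mul_le_mul h1 (le_trans h2 hcos) (by linarith) (by linarith)
        have hsdiff : 0.405 * a * (z - C) ≤ Real.sin z - Real.sin C := by nlinarith [hA, hsub]
        have haz : (0:ℝ) ≤ 0.405 * a * (z - C) :=
          mul_nonneg (mul_nonneg (by norm_num) ha0.le) (by linarith)
        have hsz : Real.sin C ≤ Real.sin z := by linarith
        have hB := mul_le_mul hsdiff (show (1.8:ℝ) ≤ Real.sin z + Real.sin C by linarith)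
          (by norm_num) (by linarith)
        have hsq : 0.729 * a * (z - C) ≤ Real.sin z ^ 2 - Real.sin C ^ 2 := by nlinarith [hB]
        -- divide by sin C ^ 2
        have hc2 : 0 < Real.sin C ^ 2 := by positivity
        have hX : (0:ℝ) ≤ Real.sin z ^ 2 - Real.sin C ^ 2 := by nlinarith [hsz, hsinCpos]
        have hrw : (Real.sin z / Real.sin C)^2 - 1
            = (Real.sin z ^ 2 - Real.sin C ^ 2) / Real.sin C ^ 2 := by
          field_simp
        have hdiv : Real.sin z ^ 2 - Real.sin C ^ 2 ≤ (Real.sin z / Real.sin C)^2 - 1 := by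
          rw [hrw, le_div_iff₀ hc2]
          nlinarith [mul_nonneg hX (show (0:ℝ) ≤ 1 - Real.sin C ^ 2 by nlinarith [hsinC1, hsinCpos])]
        -- Bernoulli
        have hber : 1 + (m:ℝ) * ((Real.sin z / Real.sin C)^2 - 1)
            ≤ ((Real.sin z / Real.sin C)^2)^m := by
          have := one_add_mul_le_pow
            (a := (Real.sin z / Real.sin C)^2 - 1)
            (by nlinarith [sq_nonneg (Real.sin z / Real.sin C)]) m
          rwa [add_sub_cancel] at this
        have hpowm : ((Real.sin z / Real.sin C)^2)^m = (Real.sin z / Real.sin C)^(2*m) := by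
          rw [← pow_mul]
        rw [← hpowm]
        nlinarith [mul_le_mul_of_nonneg_left (le_trans hsq hdiv) hmpos.le]
    set K : ℝ := 0.729 * (m:ℝ) * a with hK
    have hKpos : 0 < K := by
      have : (0:ℝ) < 0.729 := by norm_num
      positivity
    -- integrability of the comparison function
    have hgint : IntervalIntegrable
        (fun z => K ^ (-(1:ℝ)/2) * (z - C) ^ (-(1:ℝ)/2)) volume C (π/2) := by
      apply IntervalIntegrable.const_mul
      have := (intervalIntegral.intervalIntegrable_rpow' (a := 0) (b := π/2 - C)
        (show (-1:ℝ) < -(1:ℝ)/2 by norm_num)).comp_sub_right C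
      rwa [zero_add, sub_add_cancel] at this
    -- pointwise comparison
    have hle : ∀ z ∈ Icc C (π/2),
        ((Real.sin z / Real.sin C) ^ (2*m) - 1) ^ (-(1:ℝ)/2)
          ≤ K ^ (-(1:ℝ)/2) * (z - C) ^ (-(1:ℝ)/2) := by
      intro z hz
      rcases eq_or_lt_of_le hz.1 with heq | hzC
      · rw [← heq, div_self (ne_of_gt hsinCpos), one_pow, sub_self, sub_self,
          Real.zero_rpow (show (-(1:ℝ)/2) ≠ 0 by norm_num), mul_zero]
      · have hx : 0 < K * (z - C) := mul_pos hKpos (by linarith)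
        have hkey := key z hz
        have hmr : (K * (z-C)) ^ (-(1:ℝ)/2) = K ^ (-(1:ℝ)/2) * (z-C) ^ (-(1:ℝ)/2) :=
          Real.mul_rpow hKpos.le (by linarith)
        rw [← hmr]
        exact Real.rpow_le_rpow_of_nonpos hx hkey (by norm_num)
    -- integrability of the integrand
    have hfint : IntervalIntegrable
        (fun z => ((Real.sin z / Real.sin C) ^ (2*m) - 1) ^ (-(1:ℝ)/2)) volume C (π/2) := by
      apply IntervalIntegrable.mono_fun' hgint
      · apply AEMeasurable.aestronglyMeasurable
        rw [uIoc_of_le hCle]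
        apply ContinuousOn.aemeasurable _ measurableSet_Ioc
        apply ContinuousOn.rpow_const
        · exact (((Real.continuous_sin.div_const _).pow _).sub continuous_const).continuousOn
        · intro z hz
          left
          have := key z (Ioc_subset_Icc_self hz)
          have hK' : 0 < K * (z - C) := mul_pos hKpos (by linarith [hz.1])
          intro h0
          rw [h0] at this
          nlinarith
      · rw [uIoc_of_le hCle]
        filter_upwards [ae_restrict_mem measurableSet_Ioc] with z hz
        rw [Real.norm_eq_abs, abs_of_nonneg (hf_nonneg C z)]
        exact hle z (Ioc_subset_Icc_self hz)
    have hint_le := intervalIntegral.integral_mono_on hCle hfint hgint hle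
    -- value of the comparison integral
    have hgval : ∫ z in C..(π/2), K ^ (-(1:ℝ)/2) * (z - C) ^ (-(1:ℝ)/2)
        = K ^ (-(1:ℝ)/2) * (2 * a ^ ((1:ℝ)/2)) := by
      rw [intervalIntegral.integral_const_mul]
      congr 1
      rw [intervalIntegral.integral_comp_sub_right (fun u => u ^ (-(1:ℝ)/2)) C, sub_self,
        integral_rpow (Or.inl (by norm_num)), Real.zero_rpow (by norm_num)]
      rw [hadef]
      norm_num
      ring
    -- final numeric computation
    have hval : K ^ (-(1:ℝ)/2) * (2 * a ^ ((1:ℝ)/2))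
        = 2 * (0.729 * (m:ℝ)) ^ (-(1:ℝ)/2) := by
      rw [hK, show (0.729 * (m:ℝ) * a) = (0.729 * (m:ℝ)) * a by ring,
        Real.mul_rpow (by positivity) ha0.le]
      rw [show (0.729 * (m:ℝ)) ^ (-(1:ℝ)/2) * a ^ (-(1:ℝ)/2) * (2 * a ^ ((1:ℝ)/2))
        = 2 * (0.729 * (m:ℝ)) ^ (-(1:ℝ)/2) * (a ^ (-(1:ℝ)/2) * a ^ ((1:ℝ)/2)) by ring]
      rw [← Real.rpow_add ha0]
      norm_num
    have hnum : (0.729 * (m:ℝ)) ^ (-(1:ℝ)/2) ≤ Real.sqrt (2 / ((n:ℝ) - 1)) := by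
      rw [← hmcast]
      have hbase : (0:ℝ) < 0.729 * (m:ℝ) := by positivity
      rw [show (-(1:ℝ)/2) = -(1/2) by norm_num, Real.rpow_neg hbase.le,
        ← Real.sqrt_eq_rpow]
      rw [inv_eq_one_div, div_le_iff₀ (Real.sqrt_pos.2 hbase)]
      rw [← Real.sqrt_mul (by positivity) _]
      rw [show 2 / (m:ℝ) * (0.729 * (m:ℝ)) = 1.458 by field_simp; ring]
      rw [show (1:ℝ) = Real.sqrt 1 from Real.sqrt_one.symm]
      exact Real.sqrt_le_sqrt (by norm_num)
    calc 2 * (∫ z in C..(π / 2), ((Real.sin z / Real.sin C) ^ (2 * m) - 1) ^ (-(1 : ℝ) / 2))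
        ≤ 2 * (K ^ (-(1:ℝ)/2) * (2 * a ^ ((1:ℝ)/2))) := by rw [← hgval]; linarith
      _ = 4 * (0.729 * (m:ℝ)) ^ (-(1:ℝ)/2) := by rw [hval]; ring
      _ ≤ 4 * Real.sqrt (2 / ((n:ℝ) - 1)) := by linarith
  refine Filter.limsup_le_of_le ?_ hev
  refine Filter.isCoboundedUnder_le_of_eventually_le (𝓝[<] (π/2)) (x := 0) ?_
  filter_upwards [self_mem_nhdsWithin] with C hC
  have hC' : C ≤ π/2 := le_of_lt hC
  exact mul_nonneg (by norm_num)
    (intervalIntegral.integral_nonneg hC' (fun u _ => hf_nonneg C u))
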